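/- Let m ≥ 1, τ and ξ_1,...,ξ_k complex numbers, and ρ : ℤ → [0,1] an m-periodic function; set φ(i,n) = 1 - ρ(n) + ρ(n)τ^{k-i+1} and assume |Π_{n=1}^m φ(i,n)| < |ξ_i···ξ_k|^m for every i. Define the m×m matrices A_i as in formula (5) of the paper. Then Σ_{0 < s_1 < ... < s_k} Π_{i=1}^k ( ρ(s_i)·ξ_i^{-s_i}·Π_{n=s_{i-1}+1}^{s_i-1} φ(i,n) ) = Σ_{v_1,...,v_k=0}^{m-1} A_1(0,v_1)·A_2(v_1,v_2)···A_k(v_{k-1},v_k), i.e., the multiple sum equals the sum of the entries in the top row of the matrix product A_1···A_k. -/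

import Mathlib

set_option maxHeartbeats 1000000

namespace PSB

open Finset

lemma prod_zpow_eq {α : Type*} (a : ℂ) (ha : a ≠ 0) (s : Finset α) (f : α → ℤ) :
    ∏ i ∈ s, a ^ f i = a ^ (∑ i ∈ s, f i) := by
  induction s using Finset.cons_induction with
  | empty => simp
  | cons x s hx ih => rw [prod_cons, sum_cons, zpow_add₀ ha, ih]

lemma telescope (W : ℕ → ℂ) (hW : ∀ a, W a ≠ 0) (n : ℕ) :
    ∏ a ∈ range n, ((W a)⁻¹ * W (a+1)) = (W 0)⁻¹ * W n := by
  induction n with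
  | zero =>
      rw [prod_range_zero]
      exact (inv_mul_cancel₀ (hW 0)).symm
  | succ n ih =>
      rw [prod_range_succ, ih]
      have h1 : W n * ((W n)⁻¹ * W (n+1)) = W (n+1) := by
        rw [← mul_assoc, mul_inv_cancel₀ (hW n), one_mul]
      rw [mul_assoc, h1]

lemma periodic_int_mul {f : ℤ → ℂ} {m : ℕ} (hf : ∀ n : ℤ, f (n + m) = f n) (n c : ℤ) :
    f (n + c * m) = f n := by
  induction c using Int.induction_on with
  | zero => simp
  | succ i ih =>
      have h1 : n + ((i : ℤ) + 1) * m = (n + i * m) + m := by ring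
      rw [h1, hf, ih]
  | pred i ih =>
      have h1 : n + (-(i:ℤ)) * m = (n + (-(i:ℤ) - 1) * m) + m := by ring
      rw [h1, hf] at ih
      exact ih

lemma prod_Ico_period {f : ℤ → ℂ} {m : ℕ} (hm : 0 < m) (hf : ∀ n : ℤ, f (n + m) = f n) (a : ℤ) :
    ∏ n ∈ Finset.Ico a (a + (m:ℤ)), f n = ∏ n ∈ Finset.Ico (0:ℤ) (m:ℤ), f n := by
  have hmZ : (0:ℤ) < m := by exact_mod_cast hm
  refine Finset.prod_nbij' (fun n => n % (m:ℤ)) (fun r => a + (r - a) % (m:ℤ)) ?_ ?_ ?_ ?_ ?_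
  · intro n _
    simp only [mem_Ico]
    exact ⟨Int.emod_nonneg n hmZ.ne', Int.emod_lt_of_pos n hmZ⟩
  · intro r _
    simp only [mem_Ico]
    have h1 : 0 ≤ (r - a) % (m:ℤ) := Int.emod_nonneg _ hmZ.ne'
    have h2 : (r - a) % (m:ℤ) < m := Int.emod_lt_of_pos _ hmZ
    omega
  · intro n hn
    simp only [mem_Ico] at hn
    have h1 : (n % (m:ℤ) - a) % (m:ℤ) = (n - a) % (m:ℤ) := by
      conv_rhs => rw [Int.sub_emod]
      rw [Int.sub_emod, Int.emod_emod_of_dvd _ dvd_rfl]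
    have h2 : (n - a) % (m:ℤ) = n - a := Int.emod_eq_of_lt (by omega) (by omega)
    show a + (n % (m:ℤ) - a) % (m:ℤ) = n
    rw [h1, h2]; ring
  · intro r hr
    simp only [mem_Ico] at hr
    have h1 : (a + (r - a) % (m:ℤ)) % (m:ℤ) = r % (m:ℤ) := by
      rw [Int.add_emod, Int.emod_emod_of_dvd _ dvd_rfl, ← Int.add_emod]
      congr 1; ring
    show (a + (r - a) % (m:ℤ)) % (m:ℤ) = r
    rw [h1, Int.emod_eq_of_lt hr.1 hr.2]
  · intro n _
    have h1 : n % (m:ℤ) + (n / (m:ℤ)) * m = n := by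
      have := Int.mul_ediv_add_emod n (m:ℤ)
      linear_combination this
    have h2 := periodic_int_mul hf (n % (m:ℤ)) (n / (m:ℤ))
    rw [h1] at h2
    show f n = f (n % (m:ℤ))
    exact h2

lemma prod_Ioo_shift {f : ℤ → ℂ} {m : ℕ} (hf : ∀ n : ℤ, f (n + m) = f n) (a b c : ℤ) :
    ∏ n ∈ Finset.Ioo (a + c * (m:ℤ)) (b + c * (m:ℤ)), f n = ∏ n ∈ Finset.Ioo a b, f n := by
  rw [show a + c*(m:ℤ) = c*(m:ℤ) + a by ring, show b + c*(m:ℤ) = c*(m:ℤ) + b by ring,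
    ← Finset.map_add_left_Ioo, Finset.prod_map]
  refine Finset.prod_congr rfl fun n _ => ?_
  show f (c * (m:ℤ) + n) = f n
  rw [show c * (m:ℤ) + n = n + c * (m:ℤ) by ring]
  exact periodic_int_mul hf n c

lemma prod_Ioo_add_mul {f : ℤ → ℂ} {m : ℕ} (hm : 0 < m) (hf : ∀ n : ℤ, f (n + m) = f n)
    (a b : ℤ) (hab : a < b) (j : ℕ) :
    ∏ n ∈ Finset.Ioo a (b + (j:ℤ) * m), f n
      = (∏ n ∈ Finset.Ioo a b, f n) * (∏ n ∈ Finset.Ico (0:ℤ) (m:ℤ), f n) ^ j := by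
  have hmZ : (0:ℤ) < m := by exact_mod_cast hm
  induction j with
  | zero => simp
  | succ j ih =>
      set c : ℤ := b + (j:ℤ) * m with hc
      have hac : a < c := by
        have : 0 ≤ (j:ℤ) * m := by positivity
        omega
      have h1 : Finset.Ioo a (c + m) = Finset.Ioo a c ∪ Finset.Ico c (c + m) := by
        ext x
        simp only [mem_Ioo, mem_union, mem_Ico]
        omega
      have hdisj : Disjoint (Finset.Ioo a c) (Finset.Ico c (c + m)) := by
        rw [Finset.disjoint_left]
        intro x hx hx'
        simp only [mem_Ioo] at hx
        simp only [mem_Ico] at hx'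
        omega
      have h2 : b + ((j:ℕ)+1:ℤ) * m = c + m := by rw [hc]; ring
      rw [show ((j+1:ℕ):ℤ) = ((j:ℕ):ℤ) + 1 by push_cast; ring, h2, h1, Finset.prod_union hdisj, ih,
        prod_Ico_period hm hf c, pow_succ]
      ring

lemma summable_of_fiberwise {α ι : Type*} [Fintype ι] [DecidableEq ι] (c : α → ι) (f : α → ℝ)
    (h : ∀ v : ι, Summable (fun t : {t : α // c t = v} => f t.1)) : Summable f := by
  have h2 : ∀ v : ι, Summable (Set.indicator {t | c t = v} f) := by
    intro v
    rw [← summable_subtype_iff_indicator]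
    exact h v
  have h3 : Summable (fun a => ∑ v : ι, Set.indicator {t | c t = v} f a) :=
    summable_sum (fun v _ => h2 v)
  refine h3.congr fun a => ?_
  rw [Finset.sum_eq_single (c a)]
  · exact Set.indicator_of_mem (show a ∈ {t | c t = c a} from rfl) f
  · intro v _ hv
    apply Set.indicator_of_notMem
    intro hh
    exact hv (Eq.symm hh)
  · intro hh
    exact absurd (Finset.mem_univ _) hh

lemma hasSum_of_fiberwise {α ι : Type*} [Fintype ι] [DecidableEq ι] (c : α → ι) (f : α → ℂ)
    (a : ι → ℂ) (h : ∀ v : ι, HasSum (fun t : {t : α // c t = v} => f t.1) (a v)) :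
    HasSum f (∑ v : ι, a v) := by
  have h2 : ∀ v : ι, HasSum (Set.indicator {t | c t = v} f) (a v) := by
    intro v
    rw [← hasSum_subtype_iff_indicator]
    exact h v
  have h3 : HasSum (fun x => ∑ v : ι, Set.indicator {t | c t = v} f x) (∑ v : ι, a v) :=
    hasSum_sum (fun v _ => h2 v)
  have h4 : (fun x => ∑ v : ι, Set.indicator {t | c t = v} f x) = f := by
    funext x
    rw [Finset.sum_eq_single (c x)]
    · exact Set.indicator_of_mem (show x ∈ {t | c t = c x} from rfl) f
    · intro v _ hv
      apply Set.indicator_of_notMem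
      intro hh
      exact hv (Eq.symm hh)
    · intro hh
      exact absurd (Finset.mem_univ _) hh
  rw [← h4]
  exact h3

def nxt {m : ℕ} (hm : 0 < m) (μ : Fin m) (t : ℕ) : Fin m :=
  ⟨((μ : ℕ) + t + 1) % m, Nat.mod_lt _ hm⟩

def resfun {m : ℕ} (hm : 0 < m) {k : ℕ} (μ0 : Fin m) (t : Fin k → ℕ) (i : Fin k) : Fin m :=
  ⟨((μ0 : ℕ) + (i : ℕ) + ∑ j : Fin k, if (j : ℕ) < (i : ℕ) then t j else 0) % m, Nat.mod_lt _ hm⟩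

lemma resfun_cons_zero {m : ℕ} (hm : 0 < m) {k : ℕ} (μ0 : Fin m) (t0 : ℕ) (t : Fin k → ℕ) :
    resfun hm μ0 (Fin.cons t0 t) 0 = μ0 := by
  apply Fin.ext
  show ((μ0 : ℕ) + ((0 : Fin (k+1)) : ℕ)
      + ∑ j : Fin (k+1), if (j : ℕ) < ((0 : Fin (k+1)) : ℕ) then Fin.cons t0 t j else 0) % m = μ0
  simp [Nat.mod_eq_of_lt μ0.2]

lemma resfun_cons_succ {m : ℕ} (hm : 0 < m) {k : ℕ} (μ0 : Fin m) (t0 : ℕ) (t : Fin k → ℕ)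
    (i : Fin k) :
    resfun hm μ0 (Fin.cons t0 t) i.succ = resfun hm (nxt hm μ0 t0) t i := by
  apply Fin.ext
  show ((μ0 : ℕ) + (i.succ : ℕ)
      + ∑ j : Fin (k+1), if (j : ℕ) < (i.succ : ℕ) then Fin.cons t0 t j else 0) % m
    = ((((μ0 : ℕ) + t0 + 1) % m) + (i : ℕ) + ∑ j : Fin k, if (j : ℕ) < (i : ℕ) then t j else 0) % m
  rw [Fin.sum_univ_succ]
  simp only [Fin.cons_zero, Fin.cons_succ, Fin.val_succ, Fin.val_zero]
  rw [add_assoc (((μ0 : ℕ) + t0 + 1) % m), Nat.mod_add_mod]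
  have h1 : (∑ j : Fin k, if (j : ℕ) + 1 < (i : ℕ) + 1 then t j else 0)
      = ∑ j : Fin k, if (j : ℕ) < (i : ℕ) then t j else 0 := by
    refine Finset.sum_congr rfl fun j _ => ?_
    simp [Nat.add_lt_add_iff_right]
  rw [if_pos (Nat.succ_pos _), h1]
  congr 1
  omega

lemma summable_pi_prod : ∀ {k : ℕ} (G : Fin k → ℕ → ℝ), (∀ i t, 0 ≤ G i t) →
    (∀ i, Summable (G i)) → Summable (fun t : Fin k → ℕ => ∏ i, G i (t i)) := by
  intro k
  induction k with
  | zero =>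
      intro G _ _
      have hsub : ∀ a b : Fin 0 → ℕ, a = b := fun a b => funext fun i => i.elim0
      haveI : Subsingleton (Fin 0 → ℕ) := ⟨hsub⟩
      haveI : Finite (Fin 0 → ℕ) := Finite.of_subsingleton
      exact Summable.of_finite
  | succ k ih =>
      intro G h0 hs
      have h1 : Summable (fun p : ℕ × (Fin k → ℕ) => G 0 p.1 * ∏ i : Fin k, G i.succ (p.2 i)) := by
        apply Summable.mul_of_nonneg (hs 0) (ih (fun i => G i.succ) (fun i t => h0 i.succ t)
          (fun i => hs i.succ))
        · exact fun t => h0 0 t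
        · exact fun t => Finset.prod_nonneg fun i _ => h0 _ _
      rw [← Equiv.summable_iff (Fin.consEquiv fun _ : Fin (k+1) => ℕ)]
      refine h1.congr fun p => ?_
      show G 0 p.1 * ∏ i : Fin k, G i.succ (p.2 i)
        = ∏ i : Fin (k+1), G i ((Fin.cons p.1 p.2 : Fin (k+1) → ℕ) i)
      rw [Fin.prod_univ_succ]
      simp

theorem chain_hasSum {m : ℕ} (hm : 0 < m) : ∀ {k : ℕ} (g : Fin k → Fin m → ℕ → ℂ)
    (M : Fin k → Matrix (Fin m) (Fin m) ℂ),
    (∀ i μ, Summable fun t => ‖g i μ t‖) →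
    (∀ i μ ν, HasSum (fun t : {t : ℕ // nxt hm μ t = ν} => g i μ t.1) (M i μ ν)) →
    ∀ μ0 : Fin m,
    HasSum (fun t : Fin k → ℕ => ∏ i, g i (resfun hm μ0 t i) (t i))
      (∑ ν, (List.ofFn M).prod μ0 ν) := by
  intro k
  induction k with
  | zero =>
      intro g M hg hM μ0
      have hval : (∑ ν, (List.ofFn M).prod μ0 ν) = 1 := by
        simp [Matrix.one_apply]
      rw [hval]
      have hsub : ∀ a b : Fin 0 → ℕ, a = b := fun a b => funext fun i => i.elim0
      have := hasSum_single (f := fun t : Fin 0 → ℕ => ∏ i, g i (resfun hm μ0 t i) (t i))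
        (fun i : Fin 0 => i.elim0) (fun b' hb' => absurd (hsub _ _) hb')
      simpa using this
  | succ k ih =>
      intro g M hg hM μ0
      have key : ∀ ν0 : Fin m, HasSum
          (fun t : Fin k → ℕ => ∏ i : Fin k, g i.succ (resfun hm ν0 t i) (t i))
          (∑ ν, (List.ofFn fun i : Fin k => M i.succ).prod ν0 ν) :=
        ih (fun i => g i.succ) (fun i => M i.succ) (fun i μ => hg i.succ μ)
          (fun i μ ν => hM i.succ μ ν)
      set S : Fin m → ℂ := fun ν0 => ∑ ν, (List.ofFn fun i : Fin k => M i.succ).prod ν0 ν with hS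
      -- the function on the product type
      set F : ℕ × (Fin k → ℕ) → ℂ := fun p =>
        g 0 μ0 p.1 * ∏ i : Fin k, g i.succ (resfun hm (nxt hm μ0 p.1) p.2 i) (p.2 i) with hF
      -- summability of F
      set G : Fin k → ℕ → ℝ := fun i t => ∑ μ : Fin m, ‖g i.succ μ t‖ with hG
      have hGnn : ∀ i t, 0 ≤ G i t := fun i t => Finset.sum_nonneg fun μ _ => norm_nonneg _
      have hGs : ∀ i, Summable (G i) := fun i => summable_sum fun μ _ => hg i.succ μ
      have hD : Summable (fun p : ℕ × (Fin k → ℕ) => ‖g 0 μ0 p.1‖ * ∏ i, G i (p.2 i)) := by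
        apply Summable.mul_of_nonneg (hg 0 μ0) (summable_pi_prod G hGnn hGs)
        · exact fun t => norm_nonneg _
        · exact fun t => Finset.prod_nonneg fun i _ => hGnn _ _
      have hFs : Summable F := by
        refine Summable.of_norm_bounded hD fun p => ?_
        rw [hF]
        simp only [norm_mul, norm_prod]
        refine mul_le_mul_of_nonneg_left ?_ (norm_nonneg _)
        refine Finset.prod_le_prod (fun i _ => norm_nonneg _) fun i _ => ?_
        rw [hG]
        exact Finset.single_le_sum (f := fun μ : Fin m => ‖g i.succ μ (p.2 i)‖)
          (fun μ _ => norm_nonneg _) (Finset.mem_univ _)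
      -- fiberwise sums
      have hfib : ∀ t0 : ℕ, HasSum (fun t => F (t0, t)) (g 0 μ0 t0 * S (nxt hm μ0 t0)) :=
        fun t0 => (key (nxt hm μ0 t0)).mul_left _
      -- row sum
      have hrow : HasSum (fun t0 : ℕ => g 0 μ0 t0 * S (nxt hm μ0 t0))
          (∑ ν, (List.ofFn M).prod μ0 ν) := by
        have h1 : ∀ ν0 : Fin m, HasSum
            (fun t0 : {t0 : ℕ // nxt hm μ0 t0 = ν0} =>
              (fun u : ℕ => g 0 μ0 u * S (nxt hm μ0 u)) t0.1)
            (M 0 μ0 ν0 * S ν0) := by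
          intro ν0
          have h2 := (hM 0 μ0 ν0).mul_right (S ν0)
          refine HasSum.congr_fun h2 fun t0 => ?_
          show g 0 μ0 t0.1 * S (nxt hm μ0 t0.1) = g 0 μ0 t0.1 * S ν0
          rw [t0.2]
        have h3 := hasSum_of_fiberwise (ι := Fin m) (fun t0 : ℕ => nxt hm μ0 t0)
          (fun u : ℕ => g 0 μ0 u * S (nxt hm μ0 u)) (fun ν0 => M 0 μ0 ν0 * S ν0) h1
        have h4 : (∑ ν0, M 0 μ0 ν0 * S ν0) = ∑ ν, (List.ofFn M).prod μ0 ν := by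
          rw [List.ofFn_succ, List.prod_cons]
          simp only [Matrix.mul_apply]
          rw [Finset.sum_comm]
          refine Finset.sum_congr rfl fun ν0 _ => ?_
          rw [hS, Finset.mul_sum]
        rwa [h4] at h3
      -- combine
      have hT : ∑' p, F p = ∑ ν, (List.ofFn M).prod μ0 ν := by
        rw [Summable.tsum_prod hFs]
        have h5 : ∀ t0 : ℕ, ∑' t, F (t0, t) = g 0 μ0 t0 * S (nxt hm μ0 t0) :=
          fun t0 => (hfib t0).tsum_eq
        rw [tsum_congr h5, hrow.tsum_eq]
      have hFsum : HasSum F (∑ ν, (List.ofFn M).prod μ0 ν) := hT ▸ hFs.hasSum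
      rw [← Equiv.hasSum_iff (Fin.consEquiv fun _ : Fin (k+1) => ℕ)]
      refine hFsum.congr_fun fun p => ?_
      show (∏ i : Fin (k+1), g i (resfun hm μ0 ((Fin.cons p.1 p.2 : Fin (k+1) → ℕ)) i)
          ((Fin.cons p.1 p.2 : Fin (k+1) → ℕ) i)) = F p
      rw [hF, Fin.prod_univ_succ]
      simp only [Fin.cons_zero, Fin.cons_succ, resfun_cons_zero hm, resfun_cons_succ hm]

lemma filter_le_card {k : ℕ} (j : Fin k) :
    (Finset.univ.filter fun i : Fin k => (i:ℕ) ≤ (j:ℕ)).card = (j:ℕ) + 1 := by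
  have h : (Finset.univ.filter fun i : Fin k => (i:ℕ) ≤ (j:ℕ)) = Finset.Iic j := by
    ext i
    simp only [Finset.mem_filter, Finset.mem_univ, true_and, Finset.mem_Iic, Fin.le_def]
  rw [h, Fin.card_Iic]

end PSB

open Finset in
/-- Main theorem (periodic case): for an `m`-periodic `ρ : ℤ → [0,1]`,
`φ i n = 1 - ρ n + ρ n · τ^{k-i}` (0-indexed `i`, matching `τ^{k-i+1}`), and
`|∏_{n=1}^m φ i n| < |ξ i ⋯ ξ (k-1)|^m` for all `i`, the sum over strictly increasing
tuples `0 = s 0 < s 1 < ⋯ < s k` of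
`∏_i ρ (s (i+1)) ξ i ^{-s (i+1)} ∏_{n=s i+1}^{s (i+1)-1} φ i n`
converges (absolutely) to the sum of the entries in the top row of the matrix product
`A 0 · A 1 ⋯ A (k-1)`, where `A i` are the `m×m` matrices of formula (5). -/
theorem periodic_step_bernoulli_matrix_formula (k m : ℕ) (hm : 1 ≤ m)
    (τ : ℂ) (ξ : Fin k → ℂ) (hξ : ∀ i, ξ i ≠ 0)
    (ρfun : ℤ → ℂ) (hper : ∀ n : ℤ, ρfun (n + m) = ρfun n)
    (hρ : ∀ n : ℤ, ∃ r : ℝ, 0 ≤ r ∧ r ≤ 1 ∧ ρfun n = (r : ℂ))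
    (φ : Fin k → ℤ → ℂ)
    (hφ : ∀ i n, φ i n = 1 - ρfun n + ρfun n * τ ^ (k - (i : ℕ)))
    (habs : ∀ i : Fin k,
      ‖∏ n ∈ Finset.Icc (1 : ℤ) m, φ i n‖ <
        ‖∏ j ∈ Finset.Ici i, ξ j‖ ^ m)
    (A : Fin k → Matrix (Fin m) (Fin m) ℂ)
    (hA : ∀ (i : Fin k) (μ ν : Fin m), A i μ ν =
      if (μ : ℕ) < (ν : ℕ) then
        ((∏ j ∈ Finset.Ici i, ξ j) ^ m * ξ i ^ (-((ν : ℕ) : ℤ)) *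
            ρfun ((ν : ℕ) : ℤ) * ∏ n ∈ Finset.Ioo ((μ : ℕ) : ℤ) ((ν : ℕ) : ℤ), φ i n) /
          ((∏ j ∈ Finset.Ici i, ξ j) ^ m - ∏ n ∈ Finset.Icc (1 : ℤ) m, φ i n)
      else
        (ξ i ^ (-((ν : ℕ) : ℤ)) * ρfun ((ν : ℕ) : ℤ) *
            ∏ n ∈ Finset.Ioo ((μ : ℕ) : ℤ) (((ν : ℕ) : ℤ) + m), φ i n) /
          ((∏ j ∈ Finset.Ici i, ξ j) ^ m - ∏ n ∈ Finset.Icc (1 : ℤ) m, φ i n)) :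
    HasSum
      (fun s : {s : Fin (k + 1) → ℕ // s 0 = 0 ∧ StrictMono s} =>
        ∏ i : Fin k,
          ρfun (s.1 i.succ : ℤ) * ξ i ^ (-(s.1 i.succ : ℤ)) *
            ∏ n ∈ Finset.Ioo ((s.1 i.castSucc : ℕ) : ℤ) ((s.1 i.succ : ℕ) : ℤ), φ i n)
      (∑ w : Fin m, (List.ofFn A).prod ⟨0, by omega⟩ w) := by
  classical
  have hm' : 0 < m := hm
  -- basic objects
  set Xi : ℕ → ℂ := fun a => ∏ j ∈ Finset.univ.filter (fun j : Fin k => a ≤ (j : ℕ)), ξ j with hXi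
  have hXine : ∀ a, Xi a ≠ 0 := fun a => Finset.prod_ne_zero_iff.mpr fun j _ => hξ j
  have hXik : Xi k = 1 := by
    simp only [hXi]
    have h1 : (Finset.univ.filter fun j : Fin k => k ≤ (j:ℕ)) = ∅ := by
      ext j
      simp only [Finset.mem_filter, Finset.mem_univ, true_and, Finset.notMem_empty, iff_false]
      have := j.isLt; omega
    rw [h1, Finset.prod_empty]
  have hXisucc : ∀ i : Fin k, Xi (i:ℕ) = ξ i * Xi ((i:ℕ)+1) := by
    intro i
    simp only [hXi]
    have h1 : (Finset.univ.filter fun j : Fin k => (i:ℕ) ≤ (j:ℕ))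
        = insert i (Finset.univ.filter fun j : Fin k => (i:ℕ)+1 ≤ (j:ℕ)) := by
      ext j
      simp only [Finset.mem_filter, Finset.mem_univ, true_and, Finset.mem_insert, Fin.ext_iff]
      omega
    rw [h1, Finset.prod_insert (by simp)]
  have hIci : ∀ i : Fin k, (∏ j ∈ Finset.Ici i, ξ j) = Xi (i:ℕ) := by
    intro i
    simp only [hXi]
    refine Finset.prod_congr ?_ (fun _ _ => rfl)
    ext j
    simp only [Finset.mem_Ici, Finset.mem_filter, Finset.mem_univ, true_and, Fin.le_def]
  set P : Fin k → ℂ := fun i => ∏ n ∈ Finset.Icc (1:ℤ) (m:ℤ), φ i n with hP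
  have hφp : ∀ (i : Fin k) (n : ℤ), φ i (n + (m:ℤ)) = φ i n := by
    intro i n; rw [hφ, hφ, hper]
  have hPIco : ∀ i, P i = ∏ n ∈ Finset.Ico (0:ℤ) (m:ℤ), φ i n := by
    intro i
    simp only [hP]
    have h1 : Finset.Icc (1:ℤ) (m:ℤ) = Finset.Ico (1:ℤ) (1 + (m:ℤ)) := by
      ext n; simp only [Finset.mem_Icc, Finset.mem_Ico]; omega
    rw [h1, PSB.prod_Ico_period hm' (hφp i) 1]
  have habs' : ∀ i, ‖P i‖ < ‖Xi (i:ℕ)‖ ^ m := by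
    intro i; have h1 := habs i; rwa [hIci i] at h1
  have hden : ∀ i : Fin k, (Xi (i:ℕ))^m - P i ≠ 0 := by
    intro i
    refine sub_ne_zero_of_ne fun hcon => ?_
    have h1 := habs' i
    rw [← hcon, norm_pow] at h1
    exact lt_irrefl _ h1
  set r : Fin k → ℂ := fun i => P i * ((Xi (i:ℕ))^m)⁻¹ with hr'
  have hrlt : ∀ i, ‖r i‖ < 1 := by
    intro i
    simp only [hr']
    rw [norm_mul, norm_inv, norm_pow,
      ← div_eq_mul_inv]
    have h0 : 0 < ‖Xi (i:ℕ)‖ ^ m := by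
      have := norm_pos_iff.mpr (hXine (i:ℕ))
      positivity
    exact (div_lt_one h0).mpr (habs' i)
  -- the transfer functions
  set g : Fin k → Fin m → ℕ → ℂ := fun i μ t =>
    Xi (i:ℕ) ^ (-(t:ℤ) - 1) * Xi (i:ℕ) ^ (-((μ:ℕ):ℤ))
      * Xi ((i:ℕ)+1) ^ (((((μ:ℕ) + t + 1) % m : ℕ)):ℤ)
      * ρfun (((μ:ℕ):ℤ) + (t:ℤ) + 1)
      * ∏ n ∈ Finset.Ioo (((μ:ℕ):ℤ)) (((μ:ℕ):ℤ) + (t:ℤ) + 1), φ i n with hg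
  set d0 : Fin m → Fin m → ℕ := fun μ ν =>
    if (μ:ℕ) < (ν:ℕ) then (ν:ℕ) - (μ:ℕ) - 1 else (ν:ℕ) + m - (μ:ℕ) - 1 with hd0
  have hd0lt : ∀ μ ν, d0 μ ν < m := by
    intro μ ν; simp only [hd0]; have := μ.2; have := ν.2; split <;> omega
  have hd0eq : ∀ μ ν : Fin m, ((μ:ℕ) < (ν:ℕ) ∧ (μ:ℕ) + d0 μ ν + 1 = (ν:ℕ)) ∨
      (¬ (μ:ℕ) < (ν:ℕ) ∧ (μ:ℕ) + d0 μ ν + 1 = (ν:ℕ) + m) := by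
    intro μ ν
    simp only [hd0]
    have := μ.2; have := ν.2
    by_cases h : (μ:ℕ) < (ν:ℕ)
    · left; rw [if_pos h]; omega
    · right; rw [if_neg h]; omega
  have hmem : ∀ (μ ν : Fin m) (j : ℕ), PSB.nxt hm' μ (d0 μ ν + j * m) = ν := by
    intro μ ν j
    apply Fin.ext
    show ((μ:ℕ) + (d0 μ ν + j * m) + 1) % m = (ν:ℕ)
    have h1 : (μ:ℕ) + (d0 μ ν + j*m) + 1 = ((μ:ℕ) + d0 μ ν + 1) + j*m := by ring
    rw [h1, Nat.add_mul_mod_self_right]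
    rcases hd0eq μ ν with ⟨_, h2⟩ | ⟨_, h2⟩
    · rw [h2, Nat.mod_eq_of_lt ν.2]
    · rw [h2, Nat.add_mod_right, Nat.mod_eq_of_lt ν.2]
  have hclassval : ∀ (μ ν : Fin m) (t : ℕ), PSB.nxt hm' μ t = ν → t % m = d0 μ ν := by
    intro μ ν t ht
    have h2 : ((μ:ℕ) + t + 1) % m = (ν:ℕ) := congrArg Fin.val ht
    have h3 : ((μ:ℕ) + (d0 μ ν + 0 * m) + 1) % m = (ν:ℕ) := congrArg Fin.val (hmem μ ν 0)
    have h4 : ((μ:ℕ)+1) + t ≡ ((μ:ℕ)+1) + d0 μ ν [MOD m] := by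
      show (((μ:ℕ)+1) + t) % m = (((μ:ℕ)+1) + d0 μ ν) % m
      rw [show ((μ:ℕ)+1) + t = (μ:ℕ) + t + 1 by ring,
        show ((μ:ℕ)+1) + d0 μ ν = (μ:ℕ) + (d0 μ ν + 0 * m) + 1 by ring, h2, h3]
    have h5 : t ≡ d0 μ ν [MOD m] := Nat.ModEq.add_left_cancel' ((μ:ℕ)+1) h4
    show t % m = d0 μ ν
    rw [Nat.ModEq] at h5
    rw [h5, Nat.mod_eq_of_lt (hd0lt μ ν)]
  let cls : ∀ (μ ν : Fin m), ℕ ≃ {t : ℕ // PSB.nxt hm' μ t = ν} := fun μ ν =>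
    { toFun := fun j => ⟨d0 μ ν + j * m, hmem μ ν j⟩
      invFun := fun t => t.1 / m
      left_inv := fun j => by
        show (d0 μ ν + j * m) / m = j
        rw [Nat.add_mul_div_right _ _ hm', Nat.div_eq_of_lt (hd0lt μ ν), zero_add]
      right_inv := fun t => by
        apply Subtype.ext
        show d0 μ ν + (t.1 / m) * m = t.1
        have h5 := hclassval μ ν t.1 t.2
        calc d0 μ ν + (t.1 / m) * m = t.1 % m + (t.1 / m) * m := by rw [← h5]
          _ = t.1 := by rw [mul_comm]; exact Nat.mod_add_div _ _ }
  set Cval : Fin k → Fin m → Fin m → ℂ := fun i μ ν =>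
    Xi (i:ℕ) ^ (-((d0 μ ν:ℤ) + 1 + ((μ:ℕ):ℤ))) * Xi ((i:ℕ)+1) ^ (((ν:ℕ):ℤ))
      * ρfun (((ν:ℕ):ℤ)) * ∏ n ∈ Finset.Ioo (((μ:ℕ):ℤ)) (((μ:ℕ):ℤ) + (d0 μ ν:ℤ) + 1), φ i n
    with hC
  have hCr : ∀ (i : Fin k) (μ ν : Fin m) (j : ℕ),
      g i μ (d0 μ ν + j * m) = Cval i μ ν * (r i) ^ j := by
    intro i μ ν j
    have hu := hXine (i:ℕ)
    have e1 : Xi (i:ℕ) ^ (-((d0 μ ν + j * m : ℕ):ℤ) - 1) * Xi (i:ℕ) ^ (-((μ:ℕ):ℤ))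
        = Xi (i:ℕ) ^ (-((d0 μ ν:ℤ) + 1 + ((μ:ℕ):ℤ))) * (((Xi (i:ℕ))^m)⁻¹)^j := by
      have h1 : ((((Xi (i:ℕ))^m)⁻¹ : ℂ))^j = Xi (i:ℕ) ^ (-((m:ℤ) * j)) := by
        rw [← zpow_natCast (Xi (i:ℕ)) m, ← zpow_neg, ← zpow_natCast (Xi (i:ℕ) ^ (-(m:ℤ))) j,
          ← zpow_mul]
        congr 1; ring
      rw [h1, ← zpow_add₀ hu, ← zpow_add₀ hu]
      congr 1; push_cast; ring
    have e2 : (((μ:ℕ) + (d0 μ ν + j * m) + 1) % m) = (ν:ℕ) := congrArg Fin.val (hmem μ ν j)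
    have e3 : ρfun (((μ:ℕ):ℤ) + ((d0 μ ν + j * m : ℕ):ℤ) + 1) = ρfun (((ν:ℕ):ℤ)) := by
      rcases hd0eq μ ν with ⟨_, h2⟩ | ⟨_, h2⟩
      · have h2' : ((μ:ℕ):ℤ) + (d0 μ ν:ℤ) + 1 = ((ν:ℕ):ℤ) := by exact_mod_cast h2
        have h3 : ((μ:ℕ):ℤ) + ((d0 μ ν + j * m : ℕ):ℤ) + 1 = ((ν:ℕ):ℤ) + (j:ℤ) * m := by
          push_cast
          push_cast at h2'
          linear_combination h2'
        rw [h3, PSB.periodic_int_mul hper]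
      · have h2' : ((μ:ℕ):ℤ) + (d0 μ ν:ℤ) + 1 = ((ν:ℕ):ℤ) + (m:ℤ) := by exact_mod_cast h2
        have h3 : ((μ:ℕ):ℤ) + ((d0 μ ν + j * m : ℕ):ℤ) + 1 = ((ν:ℕ):ℤ) + ((j:ℤ)+1) * m := by
          push_cast
          push_cast at h2'
          linear_combination h2'
        rw [h3, PSB.periodic_int_mul hper]
    have e4 : (∏ n ∈ Finset.Ioo (((μ:ℕ):ℤ)) (((μ:ℕ):ℤ) + ((d0 μ ν + j * m : ℕ):ℤ) + 1), φ i n)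
        = (∏ n ∈ Finset.Ioo (((μ:ℕ):ℤ)) (((μ:ℕ):ℤ) + (d0 μ ν:ℤ) + 1), φ i n) * (P i)^j := by
      have h3 : ((μ:ℕ):ℤ) + ((d0 μ ν + j * m : ℕ):ℤ) + 1
          = (((μ:ℕ):ℤ) + (d0 μ ν:ℤ) + 1) + (j:ℤ) * m := by push_cast; ring
      rw [h3, PSB.prod_Ioo_add_mul hm' (hφp i) _ _ (by omega) j, ← hPIco i]
    show Xi (i:ℕ) ^ (-((d0 μ ν + j * m : ℕ):ℤ) - 1) * Xi (i:ℕ) ^ (-((μ:ℕ):ℤ))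
      * Xi ((i:ℕ)+1) ^ (((((μ:ℕ) + (d0 μ ν + j * m) + 1) % m : ℕ)):ℤ)
      * ρfun (((μ:ℕ):ℤ) + ((d0 μ ν + j * m : ℕ):ℤ) + 1)
      * ∏ n ∈ Finset.Ioo (((μ:ℕ):ℤ)) (((μ:ℕ):ℤ) + ((d0 μ ν + j * m : ℕ):ℤ) + 1), φ i n
      = Cval i μ ν * (r i) ^ j
    rw [e1, e2, e3, e4]
    simp only [hC, hr']
    rw [mul_pow]
    ring
  have hMsum : ∀ (i : Fin k) (μ ν : Fin m),
      HasSum (fun t : {t : ℕ // PSB.nxt hm' μ t = ν} => g i μ t.1) (A i μ ν) := by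
    intro i μ ν
    rw [← Equiv.hasSum_iff (cls μ ν)]
    have hgeo := (hasSum_geometric_of_norm_lt_one (hrlt i)).mul_left (Cval i μ ν)
    have hval : Cval i μ ν * (1 - r i)⁻¹ = A i μ ν := by
      have h1 : (1 - r i)⁻¹ = (Xi (i:ℕ))^m * ((Xi (i:ℕ))^m - P i)⁻¹ := by
        simp only [hr']
        have hX : (Xi (i:ℕ))^m ≠ 0 := pow_ne_zero m (hXine (i:ℕ))
        have h2 : 1 - P i * ((Xi (i:ℕ))^m)⁻¹ = ((Xi (i:ℕ))^m - P i) * ((Xi (i:ℕ))^m)⁻¹ := by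
          rw [sub_mul, mul_inv_cancel₀ hX]
        rw [h2, mul_inv, inv_inv, mul_comm]
      have h5 : Xi ((i:ℕ)+1) ≠ 0 := hXine _
      have h6 : (ξ i * Xi ((i:ℕ)+1))^m - P i ≠ 0 := by rw [← hXisucc i]; exact hden i
      rw [hA i μ ν, hIci i, h1]
      simp only [hC]
      have hPdef : (∏ n ∈ Finset.Icc (1:ℤ) (m:ℤ), φ i n) = P i := rfl
      have hc1 : (Xi ((i:ℕ)+1) ^ ((ν:ℕ)) : ℂ)⁻¹ * Xi ((i:ℕ)+1) ^ ((ν:ℕ)) = 1 :=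
        inv_mul_cancel₀ (pow_ne_zero _ h5)
      rcases hd0eq μ ν with ⟨hlt, h2⟩ | ⟨hlt, h2⟩
      · rw [if_pos hlt]
        have h3 : (-((d0 μ ν:ℤ) + 1 + ((μ:ℕ):ℤ))) = -((ν:ℕ):ℤ) := by push_cast; omega
        have h4 : ((μ:ℕ):ℤ) + (d0 μ ν:ℤ) + 1 = ((ν:ℕ):ℤ) := by exact_mod_cast h2
        rw [h3, h4]
        simp only [zpow_neg, zpow_natCast]
        rw [hXisucc i, hPdef, div_eq_mul_inv]
        simp only [mul_pow, mul_inv]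
        linear_combination (ρfun (((ν:ℕ):ℤ)) * (∏ n ∈ Finset.Ioo (((μ:ℕ):ℤ)) (((ν:ℕ):ℤ)), φ i n)
          * (ξ i ^ ((ν:ℕ)))⁻¹ * (ξ i ^ m * Xi ((i:ℕ)+1) ^ m)
          * ((ξ i ^ m * Xi ((i:ℕ)+1) ^ m - P i)⁻¹)) * hc1
      · rw [if_neg hlt]
        have h4 : ((μ:ℕ):ℤ) + (d0 μ ν:ℤ) + 1 = ((ν:ℕ):ℤ) + (m:ℤ) := by exact_mod_cast h2
        have h3 : (-((d0 μ ν:ℤ) + 1 + ((μ:ℕ):ℤ))) = -((ν:ℕ):ℤ) + -(m:ℤ) := by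
          push_cast at h4 ⊢; omega
        rw [h3, h4, zpow_add₀ (hXine _)]
        simp only [zpow_neg, zpow_natCast]
        rw [hXisucc i, hPdef, div_eq_mul_inv]
        simp only [mul_pow, mul_inv]
        have hc2 : ((ξ i ^ m : ℂ)⁻¹ * ξ i ^ m) * ((Xi ((i:ℕ)+1) ^ m : ℂ)⁻¹ * Xi ((i:ℕ)+1) ^ m)
            * ((Xi ((i:ℕ)+1) ^ ((ν:ℕ)) : ℂ)⁻¹ * Xi ((i:ℕ)+1) ^ ((ν:ℕ))) = 1 := by
          rw [inv_mul_cancel₀ (pow_ne_zero _ (hξ i)), inv_mul_cancel₀ (pow_ne_zero _ h5), hc1]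
          ring
        linear_combination (ρfun (((ν:ℕ):ℤ)) * (∏ n ∈ Finset.Ioo (((μ:ℕ):ℤ)) (((ν:ℕ):ℤ) + (m:ℤ)), φ i n)
          * (ξ i ^ ((ν:ℕ)))⁻¹
          * ((ξ i ^ m * Xi ((i:ℕ)+1) ^ m - P i)⁻¹)) * hc2
    rw [← hval]
    refine HasSum.congr_fun hgeo fun j => ?_
    show g i μ (d0 μ ν + j * m) = Cval i μ ν * (r i) ^ j
    exact hCr i μ ν j
  have hgsum : ∀ (i : Fin k) (μ : Fin m), Summable (fun t : ℕ => ‖g i μ t‖) := by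
    intro i μ
    apply PSB.summable_of_fiberwise (fun t : ℕ => PSB.nxt hm' μ t)
    intro ν
    rw [← Equiv.summable_iff (cls μ ν)]
    have h1 : Summable (fun j : ℕ => ‖Cval i μ ν‖ * ‖r i‖ ^ j) :=
      (summable_geometric_of_lt_one (norm_nonneg _) (hrlt i)).mul_left _
    refine h1.congr fun j => ?_
    show ‖Cval i μ ν‖ * ‖r i‖^j = ‖g i μ (d0 μ ν + j * m)‖
    simp only [hCr i μ ν j, norm_mul, norm_pow]
  have hchain := PSB.chain_hasSum hm' g A hgsum hMsum ⟨0, hm'⟩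
  -- reparametrization by gap variables
  set sfun : (Fin k → ℕ) → ℕ → ℕ :=
    fun t a => a + ∑ j : Fin k, if (j:ℕ) < a then t j else 0 with hsfun
  have hsfun0 : ∀ t, sfun t 0 = 0 := by
    intro t; simp only [hsfun]; simp
  have hsucc : ∀ (t : Fin k → ℕ) (i : Fin k), sfun t ((i:ℕ)+1) = sfun t (i:ℕ) + t i + 1 := by
    intro t i
    simp only [hsfun]
    have h1 : ∀ j : Fin k, (if (j:ℕ) < (i:ℕ) + 1 then t j else 0)
        = (if (j:ℕ) < (i:ℕ) then t j else 0) + (if j = i then t j else 0) := by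
      intro j
      rcases lt_trichotomy ((j:ℕ)) ((i:ℕ)) with h2 | h2 | h2
      · rw [if_pos (by omega), if_pos h2,
          if_neg (fun h => by rw [h] at h2; exact lt_irrefl _ h2), add_zero]
      · have h3 : j = i := Fin.ext h2
        rw [if_pos (by omega), if_neg (by omega), if_pos h3, zero_add, h3]
      · rw [if_neg (by omega), if_neg (by omega),
          if_neg (fun h => by rw [h] at h2; exact lt_irrefl _ h2), add_zero]
    rw [Finset.sum_congr rfl fun j _ => h1 j, Finset.sum_add_distrib,
      Finset.sum_ite_eq' Finset.univ i t, if_pos (Finset.mem_univ i)]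
    omega
  have hmono : ∀ t : Fin k → ℕ, StrictMono (fun i : Fin (k+1) => sfun t (i:ℕ)) := by
    intro t
    rw [Fin.strictMono_iff_lt_succ]
    intro i
    show sfun t ((i.castSucc : Fin (k+1)):ℕ) < sfun t ((i.succ : Fin (k+1)):ℕ)
    rw [show ((i.castSucc : Fin (k+1)):ℕ) = (i:ℕ) from rfl,
      show ((i.succ : Fin (k+1)):ℕ) = (i:ℕ) + 1 from rfl, hsucc t i]
    omega
  let E : {s : Fin (k+1) → ℕ // s 0 = 0 ∧ StrictMono s} ≃ (Fin k → ℕ) :=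
    { toFun := fun s i => s.1 i.succ - s.1 i.castSucc - 1
      invFun := fun t => ⟨fun i => sfun t (i:ℕ), by
        refine ⟨?_, hmono t⟩
        show sfun t ((0 : Fin (k+1)):ℕ) = 0
        exact hsfun0 t⟩
      left_inv := by
        intro s
        apply Subtype.ext
        funext i
        show sfun (fun i => s.1 i.succ - s.1 i.castSucc - 1) (i:ℕ) = s.1 i
        induction i using Fin.induction with
        | zero => rw [show ((0 : Fin (k+1)):ℕ) = 0 from rfl, hsfun0]; exact s.2.1.symm
        | succ i ih =>
            rw [show ((i.succ : Fin (k+1)):ℕ) = (i:ℕ)+1 from rfl, hsucc]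
            have h2 : s.1 i.castSucc < s.1 i.succ := s.2.2 (Fin.castSucc_lt_succ (i := i))
            rw [show ((i.castSucc : Fin (k+1)):ℕ) = (i:ℕ) from rfl] at ih
            rw [ih]
            omega
      right_inv := by
        intro t
        funext i
        show sfun t ((i.succ : Fin (k+1)):ℕ) - sfun t ((i.castSucc : Fin (k+1)):ℕ) - 1 = t i
        rw [show ((i.succ : Fin (k+1)):ℕ) = (i:ℕ)+1 from rfl,
          show ((i.castSucc : Fin (k+1)):ℕ) = (i:ℕ) from rfl, hsucc]
        omega }
  rw [← Equiv.hasSum_iff E.symm]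
  refine HasSum.congr_fun hchain fun t => ?_
  show (∏ i : Fin k, ρfun ((sfun t ((i:ℕ)+1) : ℕ):ℤ) * ξ i ^ (-((sfun t ((i:ℕ)+1):ℕ):ℤ))
      * ∏ n ∈ Finset.Ioo ((sfun t (i:ℕ):ℕ):ℤ) ((sfun t ((i:ℕ)+1):ℕ):ℤ), φ i n)
    = ∏ i, g i (PSB.resfun hm' ⟨0, hm'⟩ t i) (t i)
  set W : ℕ → ℂ := fun a => Xi a ^ ((sfun t a % m : ℕ):ℤ) with hW
  have hWne : ∀ a, W a ≠ 0 := fun a => zpow_ne_zero _ (hXine a)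
  have hW0 : W 0 = 1 := by simp only [hW]; rw [hsfun0]; norm_num
  have hWk : W k = 1 := by simp only [hW]; rw [hXik, one_zpow]
  have hq : ∀ a : ℕ, sfun t a % m + (sfun t a / m) * m = sfun t a := by
    intro a; rw [mul_comm]; exact Nat.mod_add_div _ _
  have hres : ∀ i : Fin k, PSB.resfun hm' ⟨0, hm'⟩ t i
      = ⟨sfun t (i:ℕ) % m, Nat.mod_lt _ hm'⟩ := by
    intro i
    apply Fin.ext
    show (((⟨0, hm'⟩ : Fin m):ℕ) + (i:ℕ) + ∑ j : Fin k, if (j:ℕ) < (i:ℕ) then t j else 0) % m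
      = sfun t (i:ℕ) % m
    simp only [hsfun]
    congr 1
    show 0 + (i:ℕ) + _ = _
    omega
  have hfac : ∀ i : Fin k, g i (⟨sfun t (i:ℕ) % m, Nat.mod_lt _ hm'⟩ : Fin m) (t i)
      = (Xi (i:ℕ) ^ (-(t i:ℤ) - 1)) * (((W (i:ℕ))⁻¹ * W ((i:ℕ)+1))
          * (ρfun ((sfun t ((i:ℕ)+1) : ℕ):ℤ)
            * ∏ n ∈ Finset.Ioo ((sfun t (i:ℕ) : ℕ):ℤ) ((sfun t ((i:ℕ)+1) : ℕ):ℤ), φ i n)) := by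
    intro i
    have hgg : g i (⟨sfun t (i:ℕ) % m, Nat.mod_lt _ hm'⟩ : Fin m) (t i)
        = Xi (i:ℕ) ^ (-(t i:ℤ) - 1) * Xi (i:ℕ) ^ (-((sfun t (i:ℕ) % m : ℕ):ℤ))
          * Xi ((i:ℕ)+1) ^ ((((sfun t (i:ℕ) % m + t i + 1) % m : ℕ)):ℤ)
          * ρfun (((sfun t (i:ℕ) % m:ℕ):ℤ) + (t i:ℤ) + 1)
          * ∏ n ∈ Finset.Ioo (((sfun t (i:ℕ) % m:ℕ):ℤ))
              (((sfun t (i:ℕ) % m:ℕ):ℤ) + (t i:ℤ) + 1), φ i n := rfl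
    rw [hgg]
    have pA : ((sfun t (i:ℕ) % m + t i + 1) % m) = sfun t ((i:ℕ)+1) % m := by
      rw [hsucc t i,
        show sfun t (i:ℕ) % m + t i + 1 = sfun t (i:ℕ) % m + (t i + 1) by ring,
        Nat.mod_add_mod]
      congr 1 <;> omega
    have h5 : sfun t ((i:ℕ)+1) = (sfun t (i:ℕ) % m + t i + 1) + (sfun t (i:ℕ)/m) * m := by
      rw [hsucc t i]
      conv_lhs => rw [← hq (i:ℕ)]
      ring
    have pC : ρfun (((sfun t (i:ℕ) % m:ℕ):ℤ) + (t i:ℤ) + 1)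
        = ρfun ((sfun t ((i:ℕ)+1) : ℕ):ℤ) := by
      have h6 : ((sfun t ((i:ℕ)+1) : ℕ):ℤ)
          = ((((sfun t (i:ℕ) % m:ℕ):ℤ) + (t i:ℤ) + 1)) + ((sfun t (i:ℕ)/m : ℕ):ℤ) * (m:ℤ) := by
        exact_mod_cast h5
      rw [h6, PSB.periodic_int_mul hper]
    have pD : (∏ n ∈ Finset.Ioo (((sfun t (i:ℕ) % m:ℕ):ℤ))
          (((sfun t (i:ℕ) % m:ℕ):ℤ) + (t i:ℤ) + 1), φ i n)
        = ∏ n ∈ Finset.Ioo ((sfun t (i:ℕ) : ℕ):ℤ) ((sfun t ((i:ℕ)+1) : ℕ):ℤ), φ i n := by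
      have h7 : ((sfun t (i:ℕ) : ℕ):ℤ)
          = ((sfun t (i:ℕ) % m : ℕ):ℤ) + ((sfun t (i:ℕ)/m : ℕ):ℤ) * (m:ℤ) := by
        exact_mod_cast (hq (i:ℕ)).symm
      have h8 : ((sfun t ((i:ℕ)+1) : ℕ):ℤ)
          = (((sfun t (i:ℕ) % m:ℕ):ℤ) + (t i:ℤ) + 1) + ((sfun t (i:ℕ)/m : ℕ):ℤ) * (m:ℤ) := by
        exact_mod_cast h5
      rw [h7, h8, PSB.prod_Ioo_shift (hφp i)]
    rw [pA, pC, pD]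
    simp only [hW]
    rw [zpow_neg]
    ring
  have htele : (∏ i : Fin k, ((W (i:ℕ))⁻¹ * W ((i:ℕ)+1))) = 1 := by
    rw [Fin.prod_univ_eq_prod_range (fun a => (W a)⁻¹ * W (a+1)) k,
      PSB.telescope W hWne k, hW0, hWk]
    norm_num
  have hI : (∏ i : Fin k, Xi (i:ℕ) ^ (-(t i:ℤ) - 1))
      = ∏ i : Fin k, ξ i ^ (-((sfun t ((i:ℕ)+1) : ℕ):ℤ)) := by
    have h1 : ∀ i : Fin k, Xi (i:ℕ) ^ (-(t i:ℤ) - 1)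
        = ∏ j ∈ Finset.univ.filter (fun j : Fin k => (i:ℕ) ≤ (j:ℕ)), ξ j ^ (-(t i:ℤ) - 1) := by
      intro i; simp only [hXi]; rw [Finset.prod_zpow]
    rw [Finset.prod_congr rfl fun i _ => h1 i]
    rw [Finset.prod_comm'
      (s' := fun j : Fin k => Finset.univ.filter fun i : Fin k => (i:ℕ) ≤ (j:ℕ))
      (t' := Finset.univ)
      (fun x y => by simp only [Finset.mem_filter, Finset.mem_univ, true_and, and_comm])]
    refine Finset.prod_congr rfl fun j _ => ?_
    rw [PSB.prod_zpow_eq (ξ j) (hξ j)]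
    congr 1
    have h2 : (∑ i ∈ Finset.univ.filter (fun i : Fin k => (i:ℕ) ≤ (j:ℕ)), ((t i : ℤ) + 1))
        = ((sfun t ((j:ℕ)+1) : ℕ) : ℤ) := by
      rw [Finset.sum_add_distrib, Finset.sum_const, nsmul_eq_mul, mul_one,
        PSB.filter_le_card j, Finset.sum_filter]
      simp only [hsfun]
      have h3 : (∑ i : Fin k, if (i:ℕ) ≤ (j:ℕ) then (t i:ℤ) else 0)
          = ∑ i : Fin k, if (i:ℕ) < (j:ℕ)+1 then (t i:ℤ) else 0 :=
        Finset.sum_congr rfl fun i _ => by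
          congr 1
          simp [Nat.lt_succ_iff]
      rw [h3]
      push_cast
      ring
    rw [← h2, ← Finset.sum_neg_distrib]
    exact Finset.sum_congr rfl fun i _ => by ring
  have hRHS : (∏ i, g i (PSB.resfun hm' ⟨0, hm'⟩ t i) (t i))
      = (∏ i : Fin k, Xi (i:ℕ) ^ (-(t i:ℤ) - 1))
        * ((∏ i : Fin k, ((W (i:ℕ))⁻¹ * W ((i:ℕ)+1)))
          * (∏ i : Fin k, ρfun ((sfun t ((i:ℕ)+1) : ℕ):ℤ)
              * ∏ n ∈ Finset.Ioo ((sfun t (i:ℕ):ℕ):ℤ) ((sfun t ((i:ℕ)+1):ℕ):ℤ), φ i n)) := by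
    rw [← Finset.prod_mul_distrib, ← Finset.prod_mul_distrib]
    refine Finset.prod_congr rfl fun i _ => ?_
    rw [hres i, hfac i]
  rw [hRHS, htele, hI, one_mul, ← Finset.prod_mul_distrib]
  exact Finset.prod_congr rfl fun i _ => by ring
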